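/- Let I be a Borel-fixed monomial ideal in R = k[x_1,...,x_r] and let n be a monomial with n ∉ I. If x_i · n ∈ I for all 1 ≤ i ≤ r−1, then either ann_{R/I}(n̄) = (x̄_1,...,x̄_{r−1}), in which case (x_1,...,x_{r-1}) is an associated prime of R/I, or there exists t ≥ 1 with x_r^{t−1}·n ∉ I and ann_{R/I}(x_r^{t−1}n) = (x̄_1,...,x̄_r), so that x_r^{t−1}n lies in the socle of R/I. -/

import Mathlib

open MvPolynomial


lemma aux_single {r : ℕ} (hr : 0 < r) (μ : Fin r →₀ ℕ)
    (h : ∀ i : Fin r, i.val < r - 1 → μ i = 0) :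
    μ = Finsupp.single ⟨r - 1, Nat.sub_lt hr Nat.one_pos⟩ (μ ⟨r - 1, Nat.sub_lt hr Nat.one_pos⟩) := by
  ext j
  rcases eq_or_ne j ⟨r - 1, Nat.sub_lt hr Nat.one_pos⟩ with hj | hj
  · subst hj; simp
  · have hj' : j.val < r - 1 := by
      have := j.isLt
      have : j.val ≠ r - 1 := fun hc => hj (Fin.ext hc)
      omega
    rw [h j hj', Finsupp.single_apply, if_neg (fun hc => hj hc.symm)]

lemma span_X_isPrime {k : Type*} [Field k] {r : ℕ} (hr : 0 < r) :
    (Ideal.span ((fun i => (X i : MvPolynomial (Fin r) k)) ''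
      {i : Fin r | i.val < r - 1})).IsPrime := by
  set lst : Fin r := ⟨r - 1, Nat.sub_lt hr Nat.one_pos⟩ with hlst
  set g : Fin r → Polynomial k := fun i => if i.val < r - 1 then 0 else Polynomial.X with hg
  have hprod : ∀ μ : Fin r →₀ ℕ, (∀ i : Fin r, i.val < r - 1 → μ i = 0) →
      (∏ i ∈ μ.support, g i ^ μ i) = Polynomial.X ^ (μ lst) := by
    intro μ hμ
    have hsub : μ.support ⊆ {lst} := by
      intro i hi
      rw [Finset.mem_singleton]
      by_contra hc
      have : i.val < r - 1 := by
        have := i.isLt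
        have : i.val ≠ r - 1 := fun hc' => hc (Fin.ext hc')
        omega
      exact Finsupp.mem_support_iff.mp hi (hμ i this)
    rw [Finset.prod_subset hsub (fun x _ hx => by
      rw [Finsupp.notMem_support_iff.mp hx, pow_zero])]
    rw [Finset.prod_singleton]
    have : g lst = Polynomial.X := by simp [hg, hlst]
    rw [this]
  have key : Ideal.span ((fun i => (X i : MvPolynomial (Fin r) k)) '' {i : Fin r | i.val < r - 1})
      = RingHom.ker (aeval g).toRingHom := by
    apply le_antisymm
    · rw [Ideal.span_le]
      rintro _ ⟨i, hi, rfl⟩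
      simp only [SetLike.mem_coe, RingHom.mem_ker, AlgHom.toRingHom_eq_coe,
        RingHom.coe_coe, aeval_X]
      simp [hg, Set.mem_setOf_eq.mp hi]
    · intro f hf
      simp only [RingHom.mem_ker, AlgHom.toRingHom_eq_coe, RingHom.coe_coe] at hf
      rw [show ((fun i => (X i : MvPolynomial (Fin r) k)) '' {i : Fin r | i.val < r - 1})
        = (X '' {i : Fin r | i.val < r - 1}) from rfl, mem_ideal_span_X_image]
      by_contra hc
      push_neg at hc
      obtain ⟨μ0, hμ0, hall⟩ := hc
      simp only [Set.mem_setOf_eq] at hall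
      have h0 : Polynomial.coeff (aeval g f) (μ0 lst) = 0 := by rw [hf]; simp
      rw [aeval_def, eval₂_eq, Polynomial.finset_sum_coeff] at h0
      rw [Finset.sum_eq_single_of_mem μ0 hμ0] at h0
      · rw [hprod μ0 hall, Polynomial.algebraMap_eq, Polynomial.coeff_C_mul,
          Polynomial.coeff_X_pow, if_pos rfl, mul_one] at h0
        exact mem_support_iff.mp hμ0 h0
      · intro b hb hbne
        by_cases hb' : ∀ i : Fin r, i.val < r - 1 → b i = 0
        · rw [hprod b hb', Polynomial.algebraMap_eq, Polynomial.coeff_C_mul,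
            Polynomial.coeff_X_pow, if_neg, mul_zero]
          intro hc
          apply hbne
          rw [aux_single hr b hb', aux_single hr μ0 hall, hc]
        · push_neg at hb'
          obtain ⟨i, hi, hbi⟩ := hb'
          rw [Finset.prod_eq_zero (Finsupp.mem_support_iff.mpr hbi)
            (by rw [show g i = 0 by simp [hg, hi], zero_pow hbi]), mul_zero,
            Polynomial.coeff_zero]
  rw [key]
  exact RingHom.ker_isPrime _

lemma mul_monomial_mem {k : Type*} [Field k] {r : ℕ} {I : Ideal (MvPolynomial (Fin r) k)}
    {S : Set (Fin r →₀ ℕ)} (hI : I = Ideal.span ((fun J => monomial J (1 : k)) '' S))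
    {p : MvPolynomial (Fin r) k} {ν : Fin r →₀ ℕ}
    (hp : p * monomial ν (1 : k) ∈ I) {μ : Fin r →₀ ℕ} (hμ : μ ∈ p.support) :
    monomial (μ + ν) (1 : k) ∈ I := by
  classical
  subst hI
  rw [mem_ideal_span_monomial_image] at hp ⊢
  intro xi hxi
  rw [support_monomial, if_neg one_ne_zero, Finset.mem_singleton] at hxi
  subst hxi
  exact hp (μ + ν)
    (by rw [mem_support_iff, coeff_mul_monomial, mul_one]; exact mem_support_iff.mp hμ)


/-- let `I` be Borel-fixed (if `x_j·m ∈ I` then `x_i·m ∈ I` for `i < j`) and `n` a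
monomial not in `I` with `x_i·n ∈ I` for all `i ≤ r−1`.  Then either the annihilator of `n̄` in
`R/I` is exactly `(x_1,...,x_{r−1})`, which is then an associated prime of `R/I`, or there is
`t ≥ 1` with `x_r^{t−1}·n ∉ I` whose annihilator is the full maximal ideal, i.e. `x_r^{t−1}·n`
lies in the socle of `R/I`. -/
theorem annihilator_dichotomy {k : Type*} [Field k] {r : ℕ} (hr : 0 < r)
    (I : Ideal (MvPolynomial (Fin r) k))
    (hmono : ∃ S : Set (Fin r →₀ ℕ), I = Ideal.span ((fun J => monomial J (1 : k)) '' S))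
    (hborel : ∀ (μ : Fin r →₀ ℕ) (i j : Fin r), i < j →
      X j * monomial μ (1 : k) ∈ I → X i * monomial μ (1 : k) ∈ I)
    (n : Fin r →₀ ℕ) (hn : monomial n (1 : k) ∉ I)
    (hann : ∀ i : Fin r, i.val < r - 1 → X i * monomial n (1 : k) ∈ I) :
    ({f : MvPolynomial (Fin r) k | f * monomial n (1 : k) ∈ I} =
        ↑(Ideal.span ((fun i => (X i : MvPolynomial (Fin r) k)) '' {i : Fin r | i.val < r - 1})) ∧
      IsAssociatedPrime
        (Ideal.span ((fun i => (X i : MvPolynomial (Fin r) k)) '' {i : Fin r | i.val < r - 1}))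
        (MvPolynomial (Fin r) k ⧸ I)) ∨
    (∃ t : ℕ, 1 ≤ t ∧
      (X ⟨r - 1, by omega⟩ : MvPolynomial (Fin r) k) ^ (t - 1) * monomial n (1 : k) ∉ I ∧
      {f : MvPolynomial (Fin r) k |
          f * ((X ⟨r - 1, by omega⟩ : MvPolynomial (Fin r) k) ^ (t - 1) *
            monomial n (1 : k)) ∈ I} =
        ↑(Ideal.span (Set.range (X : Fin r → MvPolynomial (Fin r) k)))) := by
  obtain ⟨S, hI⟩ := hmono
  have hlt : r - 1 < r := by omega
  have hXmul : ∀ (i : Fin r) (s : Fin r →₀ ℕ) (a : k),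
      X i * monomial s a = monomial (Finsupp.single i 1 + s) a := fun i s a => by
    rw [monomial_single_add, pow_one]
  by_cases hcase : ∃ t : ℕ,
      monomial (Finsupp.single (⟨r - 1, hlt⟩ : Fin r) t + n) (1 : k) ∈ I
  · -- socle case
    right
    classical
    have h1 : 1 ≤ Nat.find hcase := by
      rcases Nat.eq_zero_or_pos (Nat.find hcase) with h0 | h1
      · exfalso
        have := Nat.find_spec hcase
        rw [h0, Finsupp.single_zero, zero_add] at this
        exact hn this
      · exact h1
    set t := Nat.find hcase with ht
    set ν : Fin r →₀ ℕ := Finsupp.single (⟨r - 1, hlt⟩ : Fin r) (t - 1) + n with hν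
    have hm : (X (⟨r - 1, hlt⟩ : Fin r) : MvPolynomial (Fin r) k) ^ (t - 1) *
        monomial n (1 : k) = monomial ν (1 : k) := by
      rw [X_pow_eq_monomial, monomial_mul, one_mul]
    have hνI : monomial ν (1 : k) ∉ I := fun hc => Nat.find_min hcase (by omega) hc
    refine ⟨t, h1, ?_, ?_⟩
    · rw [hm]; exact hνI
    · rw [hm]
      ext f
      simp only [Set.mem_setOf_eq, SetLike.mem_coe]
      constructor
      · intro hf
        rw [← Set.image_univ, mem_ideal_span_X_image]
        intro m hm'
        have hm0 : m ≠ 0 := by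
          rintro rfl
          exact hνI (by simpa using mul_monomial_mem hI hf hm')
        obtain ⟨i, hi⟩ := Finsupp.ne_iff.mp hm0
        exact ⟨i, Set.mem_univ i, by simpa using hi⟩
      · intro hf
        have hle : Ideal.span (Set.range (X : Fin r → MvPolynomial (Fin r) k)) ≤
            I.colon (Ideal.span {monomial ν (1 : k)}) := by
          rw [Ideal.span_le]
          rintro _ ⟨i, rfl⟩
          rw [SetLike.mem_coe, Ideal.mem_colon_span_singleton, hXmul]
          by_cases hi : i.val < r - 1
          · have h2 := I.mul_mem_right
              (monomial (Finsupp.single (⟨r - 1, hlt⟩ : Fin r) (t - 1)) (1 : k)) (hann i hi)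
            rw [hXmul, monomial_mul, mul_one] at h2
            have he : (Finsupp.single i 1) + ν =
                (Finsupp.single i 1 + n) + Finsupp.single (⟨r - 1, hlt⟩ : Fin r) (t - 1) := by
              rw [hν]; abel
            rw [he]
            exact h2
          · have hieq : i = (⟨r - 1, hlt⟩ : Fin r) := Fin.ext (show i.val = r - 1 by have := i.isLt; omega)
            rw [hieq, hν, ← add_assoc, ← Finsupp.single_add]
            have h1t : 1 + (t - 1) = t := by omega
            rw [h1t]
            exact Nat.find_spec hcase
        exact Ideal.mem_colon_span_singleton.mp (hle hf)
  · -- associated prime case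
    left
    push_neg at hcase
    have hset : {f : MvPolynomial (Fin r) k | f * monomial n (1 : k) ∈ I} =
        ↑(Ideal.span ((fun i => (X i : MvPolynomial (Fin r) k)) ''
          {i : Fin r | i.val < r - 1})) := by
      ext f
      simp only [Set.mem_setOf_eq, SetLike.mem_coe]
      constructor
      · intro hf
        rw [show ((fun i => (X i : MvPolynomial (Fin r) k)) '' {i : Fin r | i.val < r - 1})
          = (X '' {i : Fin r | i.val < r - 1}) from rfl, mem_ideal_span_X_image]
        intro m hm
        by_contra hc
        push_neg at hc
        simp only [Set.mem_setOf_eq] at hc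
        have hall : ∀ i : Fin r, i.val < r - 1 → m i = 0 := hc
        have hmem := mul_monomial_mem hI hf hm
        rw [aux_single hr m hall] at hmem
        exact hcase (m ⟨r - 1, by omega⟩) hmem
      · intro hf
        have hle : Ideal.span ((fun i => (X i : MvPolynomial (Fin r) k)) ''
            {i : Fin r | i.val < r - 1}) ≤ I.colon (Ideal.span {monomial n (1 : k)}) := by
          rw [Ideal.span_le]
          rintro _ ⟨i, hi, rfl⟩
          rw [SetLike.mem_coe, Ideal.mem_colon_span_singleton]
          exact hann i hi
        exact Ideal.mem_colon_span_singleton.mp (hle hf)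
    refine ⟨hset, isAssociatedPrime_iff.mpr ⟨span_X_isPrime hr, ⟨Ideal.Quotient.mk I (monomial n (1 : k)), ?_⟩⟩⟩
    ext f
    rw [Submodule.mem_colon_singleton, Submodule.mem_bot]
    have hsm : f • Ideal.Quotient.mk I (monomial n (1 : k)) =
        Ideal.Quotient.mk I (f * monomial n (1 : k)) := rfl
    rw [hsm, Ideal.Quotient.eq_zero_iff_mem]
    constructor
    · intro hf
      have hf' : f ∈ {g : MvPolynomial (Fin r) k | g * monomial n (1 : k) ∈ I} := by
        rw [hset]; exact hf
      exact hf'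
    · intro hf
      have hf' : f ∈ {g : MvPolynomial (Fin r) k | g * monomial n (1 : k) ∈ I} := hf
      rw [hset] at hf'
      exact hf'
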